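/- Let (f,a) and (g,b) be elements of the partial wreath product IS_m ≀_p IS_n. Then (f,a) L (g,b) (Green's L-relation) if and only if ran(a) = ran(b) and for every z ∈ ran(a) one has g^{b^{-1}}(z) L f^{a^{-1}}(z) in IS_m, i.e. ran(g^{b^{-1}}(z)) = ran(f^{a^{-1}}(z)), where a^{-1}, b^{-1} denote the inverse partial bijections of a, b. -/

import Mathlib

open scoped Classical

/-- `IS n` is the full inverse symmetric semigroup: all partial bijections of `Fin n`;
multiplication is composition of partial maps (maps acting on the right). -/
abbrev IS (n : ℕ) : Type := PEquiv (Fin n) (Fin n)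

noncomputable section
namespace ISW

instance {n : ℕ} : Mul (IS n) := ⟨PEquiv.trans⟩
instance {n : ℕ} : One (IS n) := ⟨PEquiv.refl _⟩

/-- The domain of a partial bijection. -/
def pdom {n : ℕ} (f : IS n) : Set (Fin n) := {x | (f x).isSome}

/-- The range of a partial bijection. -/
def pran {n : ℕ} (f : IS n) : Set (Fin n) := {y | (f.symm y).isSome}

/-- Green's R-relation on a semigroup (with identity): `u R v` iff `uS = vS`. -/
def GreenR {S : Type*} [Mul S] (u v : S) : Prop :=
  {w | ∃ s, w = u * s} = {w | ∃ s, w = v * s}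

/-- Green's L-relation on a semigroup (with identity): `u L v` iff `Su = Sv`. -/
def GreenL {S : Type*} [Mul S] (u v : S) : Prop :=
  {w | ∃ s, w = s * u} = {w | ∃ s, w = s * v}

/-- An R-cross-section: a subsemigroup containing exactly one element of every
Green R-class. -/
def IsRCrossSection {S : Type*} [Mul S] (T : Set S) : Prop :=
  (∀ a ∈ T, ∀ b ∈ T, a * b ∈ T) ∧ ∀ x : S, ∃! t, t ∈ T ∧ GreenR x t

/-- An L-cross-section: a subsemigroup containing exactly one element of every
Green L-class. -/
def IsLCrossSection {S : Type*} [Mul S] (T : Set S) : Prop :=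
  (∀ a ∈ T, ∀ b ∈ T, a * b ∈ T) ∧ ∀ x : S, ∃! t, t ∈ T ∧ GreenL x t

/-- `φ` realizes a semigroup isomorphism from `T₁` onto `T₂`. -/
def IsSemiIso {S₁ S₂ : Type*} [Mul S₁] [Mul S₂] (T₁ : Set S₁) (T₂ : Set S₂)
    (φ : S₁ → S₂) : Prop :=
  Set.BijOn φ T₁ T₂ ∧ ∀ a ∈ T₁, ∀ b ∈ T₁, φ (a * b) = φ a * φ b

/-- The partial wreath product `IS m ≀_p IS n`: pairs `(f, a)` with `a ∈ IS n` and
`f` a partial map from `Fin n` to `IS m` whose domain equals the domain of `a`. -/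
structure PW (m n : ℕ) where
  base : IS n
  fib : Fin n → Option (IS m)
  dom_eq : ∀ x, (fib x).isSome ↔ (base x).isSome

/-- Multiplication of the partial wreath product: `(f,a)·(g,b) = (f g^a, ab)`. -/
instance {m n : ℕ} : Mul (PW m n) where
  mul u v :=
    { base := u.base * v.base
      fib := fun x => Option.map₂ (· * ·) (u.fib x) ((u.base x).bind v.fib)
      dom_eq := by
        intro x
        show _ ↔ (((u.base x).bind v.base)).isSome
        cases h : u.base x with
        | none =>
          have : u.fib x = none := by
            have := (u.dom_eq x)
            simp [h] at this
            simpa using Option.not_isSome_iff_eq_none.mp (by simp [this])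
          simp [h, this, Option.map₂]
        | some y =>
          have hf : (u.fib x).isSome := (u.dom_eq x).mpr (by simp [h])
          obtain ⟨s, hs⟩ := Option.isSome_iff_exists.mp hf
          cases h2 : v.base y with
          | none =>
            have : v.fib y = none := by
              have := (v.dom_eq y)
              simp [h2] at this
              simpa using Option.not_isSome_iff_eq_none.mp (by simp [this])
            simp [h, h2, hs, this, Option.map₂]
          | some z =>
            have hg : (v.fib y).isSome := (v.dom_eq y).mpr (by simp [h2])
            obtain ⟨t, ht⟩ := Option.isSome_iff_exists.mp hg
            simp [h, h2, hs, ht, Option.map₂] }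

/-- The identity of the partial wreath product. -/
instance {m n : ℕ} : One (PW m n) where
  one :=
    { base := 1
      fib := fun _ => some 1
      dom_eq := by intro x; simp; rfl }

/-- `chainFun L j x`: with `L` listing the elements of a block in increasing order and
`0 ≤ j < |L|` (`j` is the 0-based version of the paper's index), this is the value at `x` of
the chain `a_{i,j}`: the partial bijection with domain everything except `L[j]`,
sending `L[l] ↦ L[l+1]` for `l < j` and fixing all other points. -/
def chainFun {n : ℕ} (L : List (Fin n)) (j : ℕ) (x : Fin n) : Option (Fin n) :=
  if x ∈ L then
    if L.idxOf x = j then none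
    else if L.idxOf x < j then L[L.idxOf x + 1]?
    else some x
  else some x

/-- The generators `a_{i,j}` attached to an ordered decomposition with blocks `B i`. -/
def RGens {n s : ℕ} (B : Fin s → List (Fin n)) : Set (IS n) :=
  {a : IS n | ∃ i : Fin s, ∃ j : ℕ, j < (B i).length ∧ ∀ x, a x = chainFun (B i) j x}

/-- `R(M⃗₁, …, M⃗ₛ)`: the subsemigroup of `IS n` generated by the chains `a_{i,j}`
together with the identity map. -/
def RSec {n s : ℕ} (B : Fin s → List (Fin n)) : Set (IS n) :=
  (Subsemigroup.closure (RGens B ∪ {1}) : Subsemigroup (IS n))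

/-- A decomposition of `Fin n` into disjoint nonempty blocks, each block equipped with
a linear order, recorded by listing the elements of each block in increasing order. -/
structure OrderedPartition (n s : ℕ) where
  B : Fin s → List (Fin n)
  nonempty : ∀ i, B i ≠ []
  nodup : ∀ i, (B i).Nodup
  disjoint : ∀ i j, i ≠ j → ∀ x, x ∈ B i → x ∉ B j
  cover : ∀ x, ∃ i, x ∈ B i

/-- The chain `a_{i,j}` of the block listed by `L`, viewed inside `IS(M_i)`, i.e. embedded
into `IS n` as a partial bijection whose domain is contained in the block: it is defined on
`L` minus `L[j]`, sends `L[l] ↦ L[l+1]` for `l < j` and fixes the other points of `L`. -/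
def chainFunB {n : ℕ} (L : List (Fin n)) (j : ℕ) (x : Fin n) : Option (Fin n) :=
  if x ∈ L then
    if L.idxOf x = j then none
    else if L.idxOf x < j then L[L.idxOf x + 1]?
    else some x
  else none

/-- The generators of `R(M⃗)` inside `IS(M)` (embedded in `IS n`), `M` listed by `L`. -/
def BlockGens {n : ℕ} (L : List (Fin n)) : Set (IS n) :=
  {a : IS n | ∃ j : ℕ, j < L.length ∧ ∀ x, a x = chainFunB L j x}

/-- The identity of `IS(M)` (embedded in `IS n`): the identity map of the block listed by `L`. -/
def idOn {n : ℕ} (L : List (Fin n)) : Set (IS n) :=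
  {a : IS n | ∀ x, a x = if x ∈ L then some x else none}

/-- The R-cross-section `R(M⃗)` of `IS(M)`, embedded into `IS n`, for the block listed by `L`. -/
def RSecBlock {n : ℕ} (L : List (Fin n)) : Set (IS n) :=
  (Subsemigroup.closure (BlockGens L ∪ idOn L) : Subsemigroup (IS n))

/-- The wreath product `R_i ≀_p R(M⃗_i)` where `R(M⃗_i) ⊆ IS(M_i)`, `M_i` listed by `L`,
and `R_i = T ⊆ IS m`, realized inside `PW m n` via the natural embedding
`IS m ≀_p IS(M_i) ⊆ IS m ≀_p IS n`. -/
def WBlock (m n : ℕ) (L : List (Fin n)) (T : Set (IS m)) : Set (PW m n) :=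
  {u : PW m n | u.base ∈ RSecBlock L ∧ ∀ x f, u.fib x = some f → f ∈ T}

/-- The element `e' = (0̄, 1)` of `IS m ≀_p IS n`: the second component is the identity of
`IS n` and the first component sends every point to the empty map `0` of `IS m`. -/
def ezero (m n : ℕ) : PW m n where
  base := 1
  fib := fun _ => some ⊥
  dom_eq := by intro x; simp; rfl


/-! ### Auxiliary lemmas for the L-relation theorem -/

lemma IS.mul_def {n : ℕ} (a b : IS n) : a * b = a.trans b := rfl

lemma IS.mul_apply {n : ℕ} (a b : IS n) (x : Fin n) : (a * b) x = (a x).bind b := rfl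

@[ext] lemma PW.ext {m n : ℕ} {u v : PW m n} (hb : u.base = v.base)
    (hf : u.fib = v.fib) : u = v := by
  cases u; cases v; simp_all

lemma PW.mul_base {m n : ℕ} (u v : PW m n) : (u * v).base = u.base * v.base := rfl

lemma PW.mul_fib {m n : ℕ} (u v : PW m n) (x : Fin n) :
    (u * v).fib x = Option.map₂ (· * ·) (u.fib x) ((u.base x).bind v.fib) := rfl

lemma IS.mul_assoc {n : ℕ} (a b c : IS n) : a * b * c = a * (b * c) :=
  PEquiv.trans_assoc a b c

lemma PW.mul_assoc {m n : ℕ} (u v w : PW m n) : u * v * w = u * (v * w) := by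
  apply PW.ext
  · exact PEquiv.trans_assoc _ _ _
  · funext x
    simp only [PW.mul_fib, PW.mul_base, IS.mul_apply]
    cases hux : u.base x with
    | none => simp [Option.map₂]
    | some y =>
      cases huf : u.fib x with
      | none => simp [Option.map₂]
      | some f =>
        cases hvy : v.base y with
        | none =>
          cases hvf : v.fib y <;> simp [Option.map₂, hvy, hvf, Function.comp]
        | some z =>
          cases hvf : v.fib y with
          | none => simp [Option.map₂, hvy, hvf, Function.comp]
          | some g =>
            cases hwf : w.fib z with
            | none => simp [Option.map₂, hvy, hvf, hwf, Function.comp]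
            | some h => simp [Option.map₂, hvy, hvf, hwf, Function.comp, IS.mul_assoc]

lemma PW.one_mul {m n : ℕ} (u : PW m n) : 1 * u = u := by
  apply PW.ext
  · exact PEquiv.refl_trans _
  · funext x
    show Option.map₂ (· * ·) (some 1) ((some x).bind u.fib) = u.fib x
    cases h : u.fib x with
    | none => simp [Option.map₂, h]
    | some f =>
      simp only [Option.bind_some, h, Option.map₂, Option.map_some]
      exact congrArg some (PEquiv.refl_trans f)

lemma greenL_iff_exists {m n : ℕ} (u v : PW m n) :
    GreenL u v ↔ (∃ s, u = s * v) ∧ (∃ t, v = t * u) := by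
  constructor
  · intro h
    constructor
    · have hu : u ∈ {w | ∃ s, w = s * u} := ⟨1, (PW.one_mul u).symm⟩
      rw [h] at hu; exact hu
    · have hv : v ∈ {w | ∃ s, w = s * v} := ⟨1, (PW.one_mul v).symm⟩
      rw [← h] at hv; exact hv
  · rintro ⟨⟨s, hs⟩, ⟨t, ht⟩⟩
    apply Set.eq_of_subset_of_subset
    · rintro w ⟨p, rfl⟩
      exact ⟨p * s, by rw [PW.mul_assoc, ← hs]⟩
    · rintro w ⟨p, rfl⟩
      exact ⟨p * t, by rw [PW.mul_assoc, ← ht]⟩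

lemma pran_trans_subset {n : ℕ} (a b : IS n) : pran (a * b) ⊆ pran b := by
  intro z hz
  have : ((a * b).symm z).isSome := hz
  rw [IS.mul_def, PEquiv.symm_trans_rev] at this
  have h2 : ((b.symm z).bind a.symm).isSome := this
  cases h : b.symm z with
  | none => rw [h] at h2; simp at h2
  | some y => exact Option.isSome_iff_exists.mpr ⟨y, h⟩

lemma trans_symm_trans_cancel {n : ℕ} (a b : IS n) (h : pran a ⊆ pran b) :
    (a.trans b.symm).trans b = a := by
  rw [PEquiv.trans_assoc]
  ext x w
  show w ∈ (a x).bind (b.symm.trans b) ↔ _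
  cases ha : a x with
  | none => simp
  | some z =>
    have hz : z ∈ pran a := by
      show (a.symm z).isSome
      rw [(PEquiv.eq_some_iff a).mpr ha]; rfl
    obtain ⟨p, hp⟩ := Option.isSome_iff_exists.mp (h hz)
    have hbp : b p = some z := (PEquiv.eq_some_iff b).mp hp
    simp [PEquiv.trans, hp, hbp]

/-- The candidate witness `s = u * v⁻¹` (with fibers `f(x) * (v.fib (x u.base v.base⁻¹))⁻¹`). -/
def lquot {m n : ℕ} (u v : PW m n) : PW m n where
  base := u.base.trans v.base.symm
  fib x := Option.map₂ (fun f g => f.trans g.symm) (u.fib x)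
    ((u.base x).bind fun z => (v.base.symm z).bind v.fib)
  dom_eq := by
    intro x
    show _ ↔ ((u.base x).bind v.base.symm).isSome
    cases hux : u.base x with
    | none =>
      have huf : u.fib x = none := by
        have := u.dom_eq x; rw [hux] at this; simpa using this.not.mpr (by simp)
      simp [huf, Option.map₂]
    | some z =>
      have huf : (u.fib x).isSome := (u.dom_eq x).mpr (by simp [hux])
      obtain ⟨f, hf⟩ := Option.isSome_iff_exists.mp huf
      cases hvz : v.base.symm z with
      | none => simp [hux, hvz, hf, Option.map₂]
      | some y =>
        have hvf : (v.fib y).isSome := (v.dom_eq y).mpr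
          (by simp [(PEquiv.eq_some_iff v.base).mp hvz])
        obtain ⟨g, hg⟩ := Option.isSome_iff_exists.mp hvf
        simp [hux, hvz, hf, hg, Option.map₂]

lemma lquot_mul {m n : ℕ} (u v : PW m n) (hpr : pran u.base = pran v.base)
    (hfib : ∀ z x y : Fin n, u.base.symm z = some x → v.base.symm z = some y →
      ∀ f g : IS m, u.fib x = some f → v.fib y = some g → pran f = pran g) :
    lquot u v * v = u := by
  have hbase : (u.base.trans v.base.symm).trans v.base = u.base :=
    trans_symm_trans_cancel u.base v.base (by rw [hpr])
  apply PW.ext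
  · exact hbase
  · funext x
    rw [PW.mul_fib]
    show Option.map₂ (· * ·)
      (Option.map₂ (fun f g => f.trans g.symm) (u.fib x)
        ((u.base x).bind fun z => (v.base.symm z).bind v.fib))
      (((u.base x).bind v.base.symm).bind v.fib) = u.fib x
    cases hux : u.base x with
    | none =>
      have huf : u.fib x = none := by
        have := u.dom_eq x; rw [hux] at this; simpa using this.not.mpr (by simp)
      simp [huf, Option.map₂]
    | some z =>
      have huf : (u.fib x).isSome := (u.dom_eq x).mpr (by simp [hux])
      obtain ⟨f, hf⟩ := Option.isSome_iff_exists.mp huf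
      have hzu : z ∈ pran u.base := by
        show (u.base.symm z).isSome
        rw [(PEquiv.eq_some_iff u.base).mpr hux]; rfl
      have hzv : z ∈ pran v.base := hpr ▸ hzu
      obtain ⟨y, hy⟩ := Option.isSome_iff_exists.mp hzv
      have hvf : (v.fib y).isSome := (v.dom_eq y).mpr
        (by simp [(PEquiv.eq_some_iff v.base).mp hy])
      obtain ⟨g, hg⟩ := Option.isSome_iff_exists.mp hvf
      have hfg : pran f = pran g :=
        hfib z x y ((PEquiv.eq_some_iff u.base).mpr hux) hy f g hf hg
      have key : (f.trans g.symm) * g = f := by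
        rw [IS.mul_def]
        exact trans_symm_trans_cancel f g (by rw [hfg])
      simp [hf, hy, hg, Option.map₂, key]

lemma fib_isSome_of_mul {m n : ℕ} {s v u : PW m n} (h : u = s * v) {x : Fin n}
    {f : IS m} (hf : u.fib x = some f) :
    ∃ h' g', s.fib x = some h' ∧ ((s.base x).bind v.fib) = some g' ∧ f = h' * g' := by
  have : Option.map₂ (· * ·) (s.fib x) ((s.base x).bind v.fib) = some f := by
    rw [← PW.mul_fib, ← h]; exact hf
  cases hs : s.fib x with
  | none => rw [hs] at this; simp [Option.map₂] at this
  | some h' =>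
    cases hg : (s.base x).bind v.fib with
    | none => rw [hs, hg] at this; simp [Option.map₂] at this
    | some g' =>
      rw [hs, hg] at this
      simp [Option.map₂] at this
      exact ⟨h', g', rfl, rfl, this.symm⟩

/-- `(f,a) L (g,b)` in `IS m ≀_p IS n` iff `ran a = ran b` and for every
`z ∈ ran a`, `ran (g^{b⁻¹}(z)) = ran (f^{a⁻¹}(z))`, i.e. `ran (f (z a⁻¹)) = ran (g (z b⁻¹))`. -/
theorem greenL_wreath_iff (m n : ℕ) (u v : PW m n) :
    GreenL u v ↔
      (pran u.base = pran v.base ∧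
        ∀ z x y : Fin n, u.base.symm z = some x → v.base.symm z = some y →
          ∀ f g : IS m, u.fib x = some f → v.fib y = some g → pran f = pran g) := by
  rw [greenL_iff_exists]
  constructor
  · rintro ⟨⟨s, hs⟩, ⟨t, ht⟩⟩
    have hbs : u.base = s.base * v.base := by rw [hs]; rfl
    have hbt : v.base = t.base * u.base := by rw [ht]; rfl
    constructor
    · apply Set.eq_of_subset_of_subset
      · rw [hbs]; exact pran_trans_subset _ _
      · rw [hbt]; exact pran_trans_subset _ _
    · intro z x y hx hy f g hf hg
      have hux : u.base x = some z := (PEquiv.eq_some_iff u.base).mp hx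
      have hvy : v.base y = some z := (PEquiv.eq_some_iff v.base).mp hy
      apply Set.eq_of_subset_of_subset
      · -- pran f ⊆ pran g, from u = s * v
        obtain ⟨h', g', hsf, hsg, hfe⟩ := fib_isSome_of_mul hs hf
        -- identify g' with g
        have hsb : (s.base x).bind v.base = some z := by
          rw [← hux, hbs]; rfl
        obtain ⟨y', hy', hvy'⟩ := Option.bind_eq_some_iff.mp hsb
        have : y' = y := by
          have := (PEquiv.eq_some_iff v.base).mpr hvy'
          rw [hy] at this; exact (Option.some.inj this).symm
        subst this
        rw [hy'] at hsg
        simp only [Option.bind_some, hg] at hsg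
        rw [hfe, Option.some.inj hsg]
        exact pran_trans_subset _ _
      · -- pran g ⊆ pran f, from v = t * u
        obtain ⟨h', f', htf, htg, hge⟩ := fib_isSome_of_mul ht hg
        have htb : (t.base y).bind u.base = some z := by
          rw [← hvy, hbt]; rfl
        obtain ⟨x', hx', hux'⟩ := Option.bind_eq_some_iff.mp htb
        have : x' = x := by
          have := (PEquiv.eq_some_iff u.base).mpr hux'
          rw [hx] at this; exact (Option.some.inj this).symm
        subst this
        rw [hx'] at htg
        simp only [Option.bind_some, hf] at htg
        rw [hge, Option.some.inj htg]
        exact pran_trans_subset _ _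
  · rintro ⟨hpr, hfib⟩
    refine ⟨⟨lquot u v, (lquot_mul u v hpr hfib).symm⟩,
      ⟨lquot v u, (lquot_mul v u hpr.symm ?_).symm⟩⟩
    intro z x y hvx huy g f hg hf
    exact (hfib z y x huy hvx f g hf hg).symm

end ISW
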